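/- There exists an efficient dominating set D of G with D ∩ S = S' if and only if the predicate T(U, p) holds. -/

import Mathlib

/-- The closed neighborhood `N[v]` of a vertex `v`. -/
def closedNbhd {V : Type*} (G : SimpleGraph V) (v : V) : Set V :=
  {w | G.Adj v w ∨ w = v}

/-- The closed neighborhood `N[X] = ⋃_{v ∈ X} N[v]` of a set of vertices. -/
def closedNbhdSet {V : Type*} (G : SimpleGraph V) (X : Set V) : Set V :=
  ⋃ v ∈ X, closedNbhd G v

/-- `D` is an efficient dominating set of `G`: every vertex has exactly one
element of `D` in its closed neighborhood, i.e. `|N[v] ∩ D| = 1`. -/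
def IsEDS {V : Type*} (G : SimpleGraph V) (D : Set V) : Prop :=
  ∀ v : V, ∃! u : V, u ∈ D ∧ u ∈ closedNbhd G v

/-- The graph `G - S`: the graph obtained from `G` by deleting the vertices of `S`
(kept on the same vertex type; vertices of `S` become isolated). -/
def deleteSet {V : Type*} (G : SimpleGraph V) (S : Set V) : SimpleGraph V where
  Adj v w := G.Adj v w ∧ v ∉ S ∧ w ∉ S
  symm := by
    refine ⟨?_⟩
    intro v w h
    exact ⟨h.1.symm, h.2.2, h.2.1⟩
  loopless := by
    refine ⟨?_⟩
    intro v h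
    exact G.irrefl h.1

/-- The predicate `T(W, j)`: there exist vertices `v i ∈ C i` for the first `j`
clusters such that `W` is the disjoint union of the sets `N[v i] ∩ U` for `i < j`,
and for every `i < j`, `C i ⊆ N[v i] ∪ N[S']` and `N[v i] ∩ N[S'] = ∅`. -/
def TPred {V : Type*} (G : SimpleGraph V) {p : ℕ} (C : Fin p → Set V)
    (S' U : Set V) (W : Set V) (j : ℕ) : Prop :=
  ∃ v : Fin p → V,
    (∀ i : Fin p, (i : ℕ) < j → v i ∈ C i) ∧
    (W = ⋃ (i : Fin p), ⋃ (_ : (i : ℕ) < j), (closedNbhd G (v i) ∩ U)) ∧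
    (∀ i i' : Fin p, (i : ℕ) < j → (i' : ℕ) < j → i ≠ i' →
      (closedNbhd G (v i) ∩ U) ∩ (closedNbhd G (v i') ∩ U) = ∅) ∧
    (∀ i : Fin p, (i : ℕ) < j →
      C i ⊆ closedNbhd G (v i) ∪ closedNbhdSet G S' ∧
      closedNbhd G (v i) ∩ closedNbhdSet G S' = ∅)

lemma mem_closedNbhd_symm {V : Type*} {G : SimpleGraph V} {v w : V} :
    w ∈ closedNbhd G v ↔ v ∈ closedNbhd G w := by
  simp only [closedNbhd, Set.mem_setOf_eq]
  constructor <;> rintro (h | h)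
  · exact Or.inl h.symm
  · exact Or.inr h.symm
  · exact Or.inl h.symm
  · exact Or.inr h.symm

lemma closed_step {V : Type*} {G : SimpleGraph V} {S : Set V}
    {K : (deleteSet G S).ConnectedComponent} {a b : V}
    (ha : a ∈ K.supp) (hb : b ∈ closedNbhd G a)
    (haS : a ∉ S) (hbS : b ∉ S) : b ∈ K.supp := by
  simp only [closedNbhd, Set.mem_setOf_eq] at hb
  rcases hb with h | h
  · have hadj : (deleteSet G S).Adj a b := ⟨h, haS, hbS⟩
    have h2 := SimpleGraph.ConnectedComponent.sound hadj.symm.reachable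
    rw [SimpleGraph.ConnectedComponent.mem_supp_iff] at ha ⊢
    rw [h2, ha]
  · subst h; exact ha

lemma mem_closedNbhdSet_iff {V : Type*} {G : SimpleGraph V} {X : Set V} {w : V} :
    w ∈ closedNbhdSet G X ↔ ∃ s ∈ X, w ∈ closedNbhd G s := by
  simp [closedNbhdSet]

/-- Setup: `S ⊆ V(G)` is such that the connected components of `G - S` are
`C 0, …, C (p-1)`, each of diameter at most 2; `S' ⊆ S` has pairwise disjoint closed
neighborhoods; `U = S \ N[S']`, and no `C i` is contained in `N[S']`.
Then there exists an efficient dominating set `D` of `G` with `D ∩ S = S'`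
if and only if the predicate `T(U, p)` holds. -/
theorem eds_extension_iff_tpred {V : Type*} [Fintype V] (G : SimpleGraph V)
    (p : ℕ) (S S' U : Set V) (C : Fin p → Set V)
    (hS'S : S' ⊆ S)
    (hS'disj : ∀ s ∈ S', ∀ t ∈ S', s ≠ t → closedNbhd G s ∩ closedNbhd G t = ∅)
    (hU : U = S \ closedNbhdSet G S')
    (hCcomp : ∀ i, ∃ K : (deleteSet G S).ConnectedComponent, C i = K.supp)
    (hCS : ∀ i, C i ∩ S = ∅)
    (hCcover : (⋃ i, C i) = Sᶜ)
    (hCdisj : ∀ i j, i ≠ j → C i ∩ C j = ∅)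
    (hCdiam : ∀ i, ∀ v ∈ C i, ∀ w ∈ C i,
      v = w ∨ (deleteSet G S).Adj v w ∨
        ∃ x, (deleteSet G S).Adj v x ∧ (deleteSet G S).Adj x w)
    (hCnot : ∀ i, ¬ (C i ⊆ closedNbhdSet G S')) :
    (∃ D : Set V, IsEDS G D ∧ D ∩ S = S') ↔ TPred G C S' U U p := by
  constructor
  · rintro ⟨D, hEDS, hDS⟩
    have hnotS : ∀ d, d ∈ D → d ∉ S' → d ∉ S := by
      intro d hD hS' hS
      exact hS' (hDS ▸ (⟨hD, hS⟩ : d ∈ D ∩ S))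
    have huniq : ∀ i : Fin p, ∀ x, x ∈ D → x ∈ C i → ∀ y, y ∈ D → y ∈ C i → x = y := by
      intro i x hxD hxC y hyD hyC
      rcases hCdiam i x hxC y hyC with h | h | ⟨z, h1, h2⟩
      · exact h
      · refine (hEDS y).unique ⟨hxD, ?_⟩ ⟨hyD, ?_⟩
        · exact Or.inl h.symm.1
        · exact Or.inr rfl
      · exact (hEDS z).unique ⟨hxD, Or.inl h1.1.symm⟩ ⟨hyD, Or.inl h2.1⟩
    have hex : ∀ i : Fin p, ∃ d, d ∈ D ∧ d ∈ C i := by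
      intro i
      obtain ⟨K, hK⟩ := hCcomp i
      obtain ⟨w, hwC, hwN⟩ := Set.not_subset.mp (hCnot i)
      obtain ⟨d, ⟨hdD, hdN⟩, -⟩ := hEDS w
      have hdS' : d ∉ S' := fun h =>
        hwN (mem_closedNbhdSet_iff.mpr ⟨d, h, mem_closedNbhd_symm.mpr hdN⟩)
      have hdS : d ∉ S := hnotS d hdD hdS'
      have hwS : w ∉ S := fun h =>
        (Set.eq_empty_iff_forall_notMem.mp (hCS i) w) ⟨hwC, h⟩
      refine ⟨d, hdD, ?_⟩
      rw [hK]
      exact closed_step (hK ▸ hwC) hdN hwS hdS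
    choose v hvD hvC using hex
    have hvS : ∀ i, v i ∉ S := fun i h =>
      (Set.eq_empty_iff_forall_notMem.mp (hCS i) (v i)) ⟨hvC i, h⟩
    have hA : ∀ i : Fin p, ∀ w ∈ C i, ∀ d, d ∈ D → d ∈ closedNbhd G w → d ∉ S' → d = v i := by
      intro i w hwC d hdD hdN hdS'
      obtain ⟨K, hK⟩ := hCcomp i
      have hdS := hnotS d hdD hdS'
      have hwS : w ∉ S := fun h =>
        (Set.eq_empty_iff_forall_notMem.mp (hCS i) w) ⟨hwC, h⟩
      have hdC : d ∈ C i := by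
        rw [hK]; exact closed_step (hK ▸ hwC) hdN hwS hdS
      exact huniq i d hdD hdC (v i) (hvD i) (hvC i)
    refine ⟨v, fun i _ => hvC i, ?_, ?_, fun i _ => ⟨?_, ?_⟩⟩
    · ext u
      simp only [Set.mem_iUnion, Set.mem_inter_iff]
      constructor
      · intro huU
        have huU' : u ∈ S \ closedNbhdSet G S' := hU ▸ huU
        obtain ⟨d, ⟨hdD, hdN⟩, -⟩ := hEDS u
        have hdS' : d ∉ S' := fun h =>
          huU'.2 (mem_closedNbhdSet_iff.mpr ⟨d, h, mem_closedNbhd_symm.mpr hdN⟩)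
        have hdS : d ∉ S := hnotS d hdD hdS'
        have hdc : d ∈ ⋃ j, C j := by rw [hCcover]; exact hdS
        obtain ⟨j, hdC⟩ := Set.mem_iUnion.mp hdc
        have hdv : d = v j := huniq j d hdD hdC (v j) (hvD j) (hvC j)
        exact ⟨j, j.isLt, hdv ▸ mem_closedNbhd_symm.mpr hdN, huU⟩
      · rintro ⟨i, -, -, h⟩
        exact h
    · intro i i' _ _ hne
      ext x
      simp only [Set.mem_inter_iff, Set.mem_empty_iff_false, iff_false]
      intro hx
      obtain ⟨⟨hxi, -⟩, hxi', -⟩ := hx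
      have hvne : v i ≠ v i' := fun h =>
        (Set.eq_empty_iff_forall_notMem.mp (hCdisj i i' hne) (v i)) ⟨hvC i, h ▸ hvC i'⟩
      exact hvne ((hEDS x).unique ⟨hvD i, mem_closedNbhd_symm.mpr hxi⟩
        ⟨hvD i', mem_closedNbhd_symm.mpr hxi'⟩)
    · intro w hwC
      obtain ⟨d, ⟨hdD, hdN⟩, -⟩ := hEDS w
      by_cases hd : d ∈ S'
      · exact Or.inr (mem_closedNbhdSet_iff.mpr ⟨d, hd, mem_closedNbhd_symm.mpr hdN⟩)
      · exact Or.inl ((hA i w hwC d hdD hdN hd) ▸ mem_closedNbhd_symm.mpr hdN)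
    · ext x
      simp only [Set.mem_inter_iff, Set.mem_empty_iff_false, iff_false]
      intro hx
      obtain ⟨hx1, hx2⟩ := hx
      obtain ⟨s, hs, hxs⟩ := mem_closedNbhdSet_iff.mp hx2
      have hsD : s ∈ D := by
        have : s ∈ D ∩ S := hDS.symm ▸ hs
        exact this.1
      have h := (hEDS x).unique ⟨hvD i, mem_closedNbhd_symm.mpr hx1⟩
        ⟨hsD, mem_closedNbhd_symm.mpr hxs⟩
      exact hvS i (h ▸ hS'S hs)
  · rintro ⟨v, hvC', hUeq, hdisj, hprop⟩
    have hvC : ∀ i, v i ∈ C i := fun i => hvC' i i.isLt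
    have hvS : ∀ i, v i ∉ S := fun i h =>
      (Set.eq_empty_iff_forall_notMem.mp (hCS i) (v i)) ⟨hvC i, h⟩
    refine ⟨S' ∪ Set.range v, ?_, ?_⟩
    · intro w
      have huniq : ∀ d1 d2, d1 ∈ S' ∪ Set.range v → d2 ∈ S' ∪ Set.range v →
          d1 ∈ closedNbhd G w → d2 ∈ closedNbhd G w → d1 = d2 := by
        intro d1 d2 h1 h2 hn1 hn2
        rcases h1 with h1 | ⟨i, rfl⟩ <;> rcases h2 with h2 | ⟨i', rfl⟩
        · by_contra hne
          exact (Set.eq_empty_iff_forall_notMem.mp (hS'disj d1 h1 d2 h2 hne) w)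
            ⟨mem_closedNbhd_symm.mpr hn1, mem_closedNbhd_symm.mpr hn2⟩
        · exfalso
          exact (Set.eq_empty_iff_forall_notMem.mp (hprop i' i'.isLt).2 w)
            ⟨mem_closedNbhd_symm.mpr hn2,
             mem_closedNbhdSet_iff.mpr ⟨d1, h1, mem_closedNbhd_symm.mpr hn1⟩⟩
        · exfalso
          exact (Set.eq_empty_iff_forall_notMem.mp (hprop i i.isLt).2 w)
            ⟨mem_closedNbhd_symm.mpr hn1,
             mem_closedNbhdSet_iff.mpr ⟨d2, h2, mem_closedNbhd_symm.mpr hn2⟩⟩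
        · rcases eq_or_ne i i' with rfl | hne
          · rfl
          exfalso
          have hw1 : w ∈ closedNbhd G (v i) := mem_closedNbhd_symm.mpr hn1
          have hw2 : w ∈ closedNbhd G (v i') := mem_closedNbhd_symm.mpr hn2
          by_cases hwS : w ∈ S
          · have hwN : w ∉ closedNbhdSet G S' := fun h =>
              (Set.eq_empty_iff_forall_notMem.mp (hprop i i.isLt).2 w) ⟨hw1, h⟩
            have hwU : w ∈ U := by rw [hU]; exact ⟨hwS, hwN⟩
            exact (Set.eq_empty_iff_forall_notMem.mp (hdisj i i' i.isLt i'.isLt hne) w)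
              ⟨⟨hw1, hwU⟩, ⟨hw2, hwU⟩⟩
          · obtain ⟨Ki, hKi⟩ := hCcomp i
            obtain ⟨Ki', hKi'⟩ := hCcomp i'
            have hwCi : w ∈ C i := by
              rw [hKi]; exact closed_step (hKi ▸ hvC i) hw1 (hvS i) hwS
            have hwCi' : w ∈ C i' := by
              rw [hKi']; exact closed_step (hKi' ▸ hvC i') hw2 (hvS i') hwS
            exact (Set.eq_empty_iff_forall_notMem.mp (hCdisj i i' hne) w) ⟨hwCi, hwCi'⟩
      by_cases hw : w ∈ closedNbhdSet G S'
      · obtain ⟨s, hs, hws⟩ := mem_closedNbhdSet_iff.mp hw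
        refine ⟨s, ⟨Set.mem_union_left _ hs, mem_closedNbhd_symm.mpr hws⟩, ?_⟩
        intro y hy
        exact huniq y s hy.1 (Set.mem_union_left _ hs) hy.2 (mem_closedNbhd_symm.mpr hws)
      by_cases hwS : w ∈ S
      · have hwU : w ∈ U := by rw [hU]; exact ⟨hwS, hw⟩
        have : w ∈ ⋃ (i : Fin p), ⋃ (_ : (i : ℕ) < p), (closedNbhd G (v i) ∩ U) := by
          rw [← hUeq]; exact hwU
        obtain ⟨i, -, hwi, -⟩ := by
          simpa only [Set.mem_iUnion, Set.mem_inter_iff] using this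
        refine ⟨v i, ⟨Set.mem_union_right _ ⟨i, rfl⟩, mem_closedNbhd_symm.mpr hwi⟩, ?_⟩
        intro y hy
        exact huniq y (v i) hy.1 (Set.mem_union_right _ ⟨i, rfl⟩) hy.2
          (mem_closedNbhd_symm.mpr hwi)
      · have hwc : w ∈ ⋃ i, C i := by rw [hCcover]; exact hwS
        obtain ⟨i, hwC⟩ := Set.mem_iUnion.mp hwc
        rcases (hprop i i.isLt).1 hwC with hwi | hwN
        · refine ⟨v i, ⟨Set.mem_union_right _ ⟨i, rfl⟩, mem_closedNbhd_symm.mpr hwi⟩, ?_⟩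
          intro y hy
          exact huniq y (v i) hy.1 (Set.mem_union_right _ ⟨i, rfl⟩) hy.2
            (mem_closedNbhd_symm.mpr hwi)
        · exact absurd hwN hw
    · ext x
      simp only [Set.mem_inter_iff, Set.mem_union, Set.mem_range]
      constructor
      · rintro ⟨h | ⟨i, rfl⟩, hS⟩
        · exact h
        · exact absurd hS (hvS i)
      · intro h
        exact ⟨Or.inl h, hS'S h⟩
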